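/- arXiv:1705.02232 — 2 statements merged into one kernel-verified Lean document; each statement's English description precedes it below -/
import Mathlib

section
/- Let X be a set with a symmetric dissimilarity d with d(y,y)=0, and define ss(Y) := (1/(2|Y|)) ∑_{y∈Y} ∑_{z∈Y} d²(y,z) and D(Y,Z) := ∑_{y∈Y} ∑_{z∈Z} d²(y,z) for finite Y, Z ⊆ X. Then for a finite Y with |Y| ≥ 2 and x ∈ Y: ss(Y \ {x}) = (|Y|/(|Y|−1)) · ss(Y) − (1/(|Y|−1)) · D({x}, Y). -/
theorem ss_erase (X : Type*) [DecidableEq X] (d : X → X → ℝ)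
    (hd_nonneg : ∀ y z, 0 ≤ d y z)
    (hd_diag : ∀ y, d y y = 0)
    (hd_symm : ∀ y z, d y z = d z y)
    (Y : Finset X) (hY : 2 ≤ Y.card) (x : X) (hx : x ∈ Y)
    (ss : Finset X → ℝ)
    (hss : ∀ Z : Finset X, ss Z = (1 / (2 * (Z.card : ℝ))) * ∑ y ∈ Z, ∑ z ∈ Z, d y z ^ 2)
    (D : Finset X → Finset X → ℝ)
    (hD : ∀ Z₁ Z₂ : Finset X, D Z₁ Z₂ = ∑ y ∈ Z₁, ∑ z ∈ Z₂, d y z ^ 2) :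
    ss (Y.erase x) =
      ((Y.card : ℝ) / ((Y.card : ℝ) - 1)) * ss Y -
        (1 / ((Y.card : ℝ) - 1)) * D {x} Y := by
  set n : ℝ := (Y.card : ℝ) with hn
  have hcard : ((Y.erase x).card : ℝ) = n - 1 := by
    rw [Finset.card_erase_of_mem hx]
    have h1 : 1 ≤ Y.card := le_trans (by norm_num) hY
    push_cast [h1]
    ring
  set S : ℝ := ∑ y ∈ Y, ∑ z ∈ Y, d y z ^ 2 with hS
  set T : ℝ := ∑ z ∈ Y, d x z ^ 2 with hT
  have hE : ∑ y ∈ Y.erase x, ∑ z ∈ Y.erase x, d y z ^ 2 = S - 2 * T := by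
    have h1 : S = T + ∑ y ∈ Y.erase x, ∑ z ∈ Y, d y z ^ 2 := by
      rw [hS, ← Finset.add_sum_erase Y _ hx]
    have h2 : ∀ y ∈ Y.erase x,
        ∑ z ∈ Y, d y z ^ 2 = d y x ^ 2 + ∑ z ∈ Y.erase x, d y z ^ 2 := by
      intro y _
      rw [← Finset.add_sum_erase Y _ hx]
    rw [Finset.sum_congr rfl h2, Finset.sum_add_distrib] at h1
    have h3 : ∑ y ∈ Y.erase x, d y x ^ 2 = T := by
      rw [hT]
      rw [← Finset.add_sum_erase Y (fun z => d x z ^ 2) hx, hd_diag]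
      norm_num
      exact Finset.sum_congr rfl fun y _ => by rw [hd_symm]
    rw [h3] at h1
    linarith
  have hn2 : (2 : ℝ) ≤ n := by rw [hn]; exact_mod_cast hY
  have h1 : n - 1 ≠ 0 := by linarith
  have h0 : n ≠ 0 := by linarith
  rw [hss, hss, hD, hcard, Finset.sum_singleton, hE, ← hS, ← hT, ← hn]
  field_simp
end

section
/- Scale equivariance of the generalized sum of squares: if d is a symmetric dissimilarity on X and λ > 0, then for the scaled dissimilarity d_λ(x,y) := λ·d(x,y), the generalized within-cluster sum of squares satisfies ss_{d_λ}(Y) = λ²·ss_d(Y) for every finite nonempty Y ⊆ X. Consequently, for two partitions {Y_i} and {Z_j} of a finite set X with all clusters having positive ss, the sWards criterion satisfies E_SW^{d_λ}(Y_1,…,Y_k) − E_SW^{d_λ}(Z_1,…,Z_m) = E_SW^{d}(Y_1,…,Y_k) − E_SW^{d}(Z_1,…,Z_m); i.e., the ordering of partitions by the sWards criterion is invariant under scaling of the dissimilarity. -/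
noncomputable def ssd {X : Type*} (d : X → X → ℝ) (Y : Finset X) : ℝ :=
  (1 / (2 * (Y.card : ℝ))) * ∑ y ∈ Y, ∑ z ∈ Y, d y z ^ 2

noncomputable def ESW {X : Type*} [Fintype X] (d : X → X → ℝ) {k : ℕ}
    (Y : Fin k → Finset X) (N : ℝ) : ℝ :=
  (N / 2) * Real.log (2 * Real.pi * Real.exp 1 / N) +
    ∑ i, (((Y i).card : ℝ) / (Fintype.card X : ℝ)) *
      ((N / 2) * Real.log (ssd d (Y i)) -
        ((N + 2) / 2) * Real.log (((Y i).card : ℝ) / (Fintype.card X : ℝ)))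

lemma ssd_scale {X : Type*} (d : X → X → ℝ) (lam : ℝ) (W : Finset X) :
    ssd (fun u v => lam * d u v) W = lam ^ 2 * ssd d W := by
  unfold ssd
  simp only [mul_pow, ← Finset.mul_sum]
  ring

lemma sum_weights {X : Type*} [Fintype X] [DecidableEq X] (hX : 0 < Fintype.card X)
    {k : ℕ} (Y : Fin k → Finset X)
    (hYdisj : ∀ i j, i ≠ j → Disjoint (Y i) (Y j))
    (hYcover : Finset.univ.biUnion Y = (Finset.univ : Finset X)) :
    ∑ i, (((Y i).card : ℝ) / (Fintype.card X : ℝ)) = 1 := by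
  have hcard : ∑ i, (Y i).card = Fintype.card X := by
    rw [← Finset.card_biUnion (fun i _ j _ h => hYdisj i j h), hYcover,
      Finset.card_univ]
  rw [← Finset.sum_div]
  rw [div_eq_one_iff_eq (by exact_mod_cast hX.ne')]
  exact_mod_cast hcard

lemma ESW_scale {X : Type*} [Fintype X] [DecidableEq X]
    (d : X → X → ℝ) (lam : ℝ) (hlam : 0 < lam) (N : ℝ)
    (hX : 0 < Fintype.card X)
    {k : ℕ} (Y : Fin k → Finset X)
    (hYdisj : ∀ i j, i ≠ j → Disjoint (Y i) (Y j))
    (hYcover : Finset.univ.biUnion Y = (Finset.univ : Finset X))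
    (hssY : ∀ i, 0 < ssd d (Y i)) :
    ESW (fun u v => lam * d u v) Y N
      = ESW d Y N + (N / 2) * Real.log (lam ^ 2) := by
  unfold ESW
  have hsum : ∀ i : Fin k,
      (((Y i).card : ℝ) / (Fintype.card X : ℝ)) *
        ((N / 2) * Real.log (ssd (fun u v => lam * d u v) (Y i)) -
          ((N + 2) / 2) * Real.log (((Y i).card : ℝ) / (Fintype.card X : ℝ)))
      = (((Y i).card : ℝ) / (Fintype.card X : ℝ)) *
        ((N / 2) * Real.log (ssd d (Y i)) -
          ((N + 2) / 2) * Real.log (((Y i).card : ℝ) / (Fintype.card X : ℝ)))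
        + (((Y i).card : ℝ) / (Fintype.card X : ℝ)) * ((N / 2) * Real.log (lam ^ 2)) := by
    intro i
    rw [ssd_scale, Real.log_mul (by positivity) (hssY i).ne']
    ring
  rw [Finset.sum_congr rfl (fun i _ => hsum i), Finset.sum_add_distrib,
    ← Finset.sum_mul, sum_weights hX Y hYdisj hYcover]
  ring

theorem sWards_scale_invariance (X : Type*) [Fintype X] [DecidableEq X]
    (d : X → X → ℝ)
    (hd_nonneg : ∀ y z, 0 ≤ d y z)
    (hd_diag : ∀ y, d y y = 0)
    (hd_symm : ∀ y z, d y z = d z y)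
    (lam : ℝ) (hlam : 0 < lam)
    (N : ℝ) (hN : 0 < N)
    (hX : 0 < Fintype.card X)
    (k m : ℕ) (Y : Fin k → Finset X) (Z : Fin m → Finset X)
    (hYdisj : ∀ i j, i ≠ j → Disjoint (Y i) (Y j))
    (hYcover : Finset.univ.biUnion Y = (Finset.univ : Finset X))
    (hZdisj : ∀ i j, i ≠ j → Disjoint (Z i) (Z j))
    (hZcover : Finset.univ.biUnion Z = (Finset.univ : Finset X))
    (hYne : ∀ i, (Y i).Nonempty) (hZne : ∀ i, (Z i).Nonempty)
    (hssY : ∀ i, 0 < ssd d (Y i)) (hssZ : ∀ i, 0 < ssd d (Z i)) :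
    (∀ W : Finset X, W.Nonempty →
        ssd (fun u v => lam * d u v) W = lam ^ 2 * ssd d W) ∧
    ESW (fun u v => lam * d u v) Y N - ESW (fun u v => lam * d u v) Z N =
      ESW d Y N - ESW d Z N := by
  refine ⟨fun W _ => ssd_scale d lam W, ?_⟩
  rw [ESW_scale d lam hlam N hX Y hYdisj hYcover hssY,
    ESW_scale d lam hlam N hX Z hZdisj hZcover hssZ]
  ring
end
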